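/- Suppose Ω is closed under single-customer removal: for every l ∈ Ω and every u ∈ N with a_{ul} ≥ 1, there exists l′ ∈ Ω with a_{ul′} = a_{ul} − 1, a_{wl′} = a_{wl} for all w ∈ N \ {u}, and c_{l′} ≤ c_l. If the equality-constrained LP Ψ_=(Ω) is feasible, then Ψ(Ω) = Ψ_=(Ω); that is, replacing the covering equalities by covering inequalities does not loosen the LP relaxation. -/

import Mathlib

noncomputable section

/-- Feasibility for the set-cover LP over the route set `Ω` (covering inequalities). -/
def FeasibleOn {α ι : Type*} [Fintype α] (Ω : Finset ι) (a : α → ι → ℕ) (K : ℕ)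
    (θ : ι → ℝ) : Prop :=
  (∀ l ∈ Ω, 0 ≤ θ l) ∧ (∀ u : α, 1 ≤ ∑ l ∈ Ω, (a u l : ℝ) * θ l) ∧
    (∑ l ∈ Ω, θ l ≤ (K : ℝ))

/-- Feasibility for the set-partition LP over `Ω` (covering equalities). -/
def EqFeasibleOn {α ι : Type*} [Fintype α] (Ω : Finset ι) (a : α → ι → ℕ) (K : ℕ)
    (θ : ι → ℝ) : Prop :=
  (∀ l ∈ Ω, 0 ≤ θ l) ∧ (∀ u : α, (∑ l ∈ Ω, (a u l : ℝ) * θ l) = 1) ∧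
    (∑ l ∈ Ω, θ l ≤ (K : ℝ))

/-- The set-cover LP value `Ψ(Ω)`. -/
def Psi {α ι : Type*} [Fintype α] (Ω : Finset ι) (c : ι → ℝ) (a : α → ι → ℕ) (K : ℕ) : ℝ :=
  sInf {r : ℝ | ∃ θ : ι → ℝ, FeasibleOn Ω a K θ ∧ r = ∑ l ∈ Ω, c l * θ l}

/-- The set-partition (equality-constrained) LP value `Ψ₌(Ω)`. -/
def PsiEq {α ι : Type*} [Fintype α] (Ω : Finset ι) (c : ι → ℝ) (a : α → ι → ℕ) (K : ℕ) : ℝ :=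
  sInf {r : ℝ | ∃ θ : ι → ℝ, EqFeasibleOn Ω a K θ ∧ r = ∑ l ∈ Ω, c l * θ l}

section Aux
variable {α ι : Type*} [Fintype α]

lemma chain_to_zero (Ω : Finset ι) (c : ι → ℝ) (a : α → ι → ℕ)
    (hclose : ∀ l ∈ Ω, ∀ u : α, 1 ≤ a u l →
      ∃ l' ∈ Ω, a u l' = a u l - 1 ∧ (∀ w : α, w ≠ u → a w l' = a w l) ∧ c l' ≤ c l)
    (u : α) :
    ∀ (n : ℕ) (l : ι), l ∈ Ω → a u l = n →
      ∃ l', l' ∈ Ω ∧ a u l' = 0 ∧ (∀ w, w ≠ u → a w l' = a w l) ∧ c l' ≤ c l := by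
  intro n
  induction n with
  | zero => exact fun l hl h0 => ⟨l, hl, h0, fun w _ => rfl, le_refl _⟩
  | succ n ih =>
    intro l hl hn
    obtain ⟨l', hl', ha, hw, hc⟩ := hclose l hl u (by omega)
    obtain ⟨l0, hl0, h0, hw0, hc0⟩ := ih l' hl' (by omega)
    exact ⟨l0, hl0, h0, fun w hwu => (hw0 w hwu).trans (hw w hwu), hc0.trans hc⟩

lemma reduce_one (Ω : Finset ι) (c : ι → ℝ) (a : α → ι → ℕ) (K : ℕ)
    (hclose : ∀ l ∈ Ω, ∀ u : α, 1 ≤ a u l →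
      ∃ l' ∈ Ω, a u l' = a u l - 1 ∧ (∀ w : α, w ≠ u → a w l' = a w l) ∧ c l' ≤ c l)
    (u : α) (θ : ι → ℝ) (hθ : FeasibleOn Ω a K θ) :
    ∃ θ' : ι → ℝ, FeasibleOn Ω a K θ' ∧ (∑ l ∈ Ω, (a u l : ℝ) * θ' l = 1) ∧
      (∀ w, w ≠ u → ∑ l ∈ Ω, (a w l : ℝ) * θ' l = ∑ l ∈ Ω, (a w l : ℝ) * θ l) ∧
      (∑ l ∈ Ω, c l * θ' l ≤ ∑ l ∈ Ω, c l * θ l) := by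
  classical
  obtain ⟨hpos, hcov, hK⟩ := hθ
  set t : ℝ := ∑ l ∈ Ω, (a u l : ℝ) * θ l with ht
  have ht1 : (1 : ℝ) ≤ t := hcov u
  have ht0 : (0 : ℝ) < t := lt_of_lt_of_le one_pos ht1
  have htne : t ≠ 0 := ne_of_gt ht0
  have hfac : (0 : ℝ) ≤ 1 - 1 / t := by
    have : 1 / t ≤ 1 := by
      rw [div_le_one ht0]; exact ht1
    linarith
  -- choice of zero-count replacement route
  have H : ∀ l : ι, ∃ l', (l ∈ Ω ∧ 1 ≤ a u l) →
      (l' ∈ Ω ∧ a u l' = 0 ∧ (∀ w, w ≠ u → a w l' = a w l) ∧ c l' ≤ c l) := by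
    intro l
    by_cases h : l ∈ Ω ∧ 1 ≤ a u l
    · obtain ⟨l', h'⟩ := chain_to_zero Ω c a hclose u (a u l) l h.1 rfl
      exact ⟨l', fun _ => h'⟩
    · exact ⟨l, fun hh => absurd hh h⟩
  choose g hg using H
  set P : Finset ι := Ω.filter (fun l => 1 ≤ a u l) with hP
  have hgmem : ∀ l ∈ P, g l ∈ Ω := by
    intro l hl; rw [hP, Finset.mem_filter] at hl; exact (hg l hl).1
  have hgzero : ∀ l ∈ P, a u (g l) = 0 := by
    intro l hl; rw [hP, Finset.mem_filter] at hl; exact (hg l hl).2.1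
  have hgw : ∀ l ∈ P, ∀ w, w ≠ u → a w (g l) = a w l := by
    intro l hl; rw [hP, Finset.mem_filter] at hl; exact (hg l hl).2.2.1
  have hgc : ∀ l ∈ P, c (g l) ≤ c l := by
    intro l hl; rw [hP, Finset.mem_filter] at hl; exact (hg l hl).2.2.2
  set θ' : ι → ℝ := fun l' =>
    (if a u l' = 0 then θ l' else θ l' / t) +
      (1 - 1 / t) * ∑ l ∈ P.filter (fun l => g l = l'), θ l with hθ'
  -- fiber swap lemma
  have fiber : ∀ f : ι → ℝ,
      ∑ l' ∈ Ω, f l' * ∑ l ∈ P.filter (fun l => g l = l'), θ l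
        = ∑ l ∈ P, f (g l) * θ l := by
    intro f
    rw [← Finset.sum_fiberwise_of_maps_to hgmem (fun l => f (g l) * θ l)]
    refine Finset.sum_congr rfl (fun l' _ => ?_)
    rw [Finset.mul_sum]
    refine Finset.sum_congr rfl (fun l hl => ?_)
    rw [Finset.mem_filter] at hl
    rw [hl.2]
  -- splitting sums over Ω into zero / positive parts
  have split : ∀ f : ι → ℝ,
      ∑ l' ∈ Ω, f l' * θ' l'
        = (∑ l' ∈ Ω.filter (fun l => ¬ 1 ≤ a u l), f l' * θ l')
          + (1 / t) * ∑ l' ∈ P, f l' * θ l'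
          + (1 - 1 / t) * ∑ l ∈ P, f (g l) * θ l := by
    intro f
    have : ∑ l' ∈ Ω, f l' * θ' l'
        = ∑ l' ∈ Ω, (f l' * (if a u l' = 0 then θ l' else θ l' / t)
            + (1 - 1 / t) * (f l' * ∑ l ∈ P.filter (fun l => g l = l'), θ l)) := by
      refine Finset.sum_congr rfl (fun l' _ => ?_)
      rw [hθ']; ring
    rw [this, Finset.sum_add_distrib, ← Finset.mul_sum, fiber f]
    congr 1
    rw [← Finset.sum_filter_add_sum_filter_not Ω (fun l => 1 ≤ a u l)]
    have h1 : ∑ l' ∈ P, f l' * (if a u l' = 0 then θ l' else θ l' / t)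
        = (1 / t) * ∑ l' ∈ P, f l' * θ l' := by
      rw [Finset.mul_sum]
      refine Finset.sum_congr rfl (fun l' hl' => ?_)
      rw [hP, Finset.mem_filter] at hl'
      rw [if_neg (by omega)]
      field_simp
    have h2 : ∑ l' ∈ Ω.filter (fun l => ¬ 1 ≤ a u l),
        f l' * (if a u l' = 0 then θ l' else θ l' / t)
          = ∑ l' ∈ Ω.filter (fun l => ¬ 1 ≤ a u l), f l' * θ l' := by
      refine Finset.sum_congr rfl (fun l' hl' => ?_)
      rw [Finset.mem_filter] at hl'
      rw [if_pos (by omega)]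
    rw [h1, h2]; ring
  -- nonnegativity
  have hpos' : ∀ l ∈ Ω, 0 ≤ θ' l := by
    intro l hl
    rw [hθ']
    have h1 : 0 ≤ (if a u l = 0 then θ l else θ l / t) := by
      split
      · exact hpos l hl
      · exact div_nonneg (hpos l hl) (le_of_lt ht0)
    have h2 : 0 ≤ ∑ l'' ∈ P.filter (fun l'' => g l'' = l), θ l'' := by
      refine Finset.sum_nonneg (fun x hx => ?_)
      rw [Finset.mem_filter, hP, Finset.mem_filter] at hx
      exact hpos x hx.1.1
    positivity
  -- u coverage = 1
  have hcovu : ∑ l ∈ Ω, (a u l : ℝ) * θ' l = 1 := by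
    rw [split (fun l => (a u l : ℝ))]
    have hz : ∑ l' ∈ Ω.filter (fun l => ¬ 1 ≤ a u l), (a u l' : ℝ) * θ l' = 0 := by
      refine Finset.sum_eq_zero (fun l' hl' => ?_)
      rw [Finset.mem_filter] at hl'
      have : a u l' = 0 := by omega
      rw [this]; simp
    have hgz : ∑ l ∈ P, (a u (g l) : ℝ) * θ l = 0 := by
      refine Finset.sum_eq_zero (fun l hl => ?_)
      rw [hgzero l hl]; simp
    have hPsum : ∑ l' ∈ P, (a u l' : ℝ) * θ l' = t := by
      rw [ht, ← Finset.sum_filter_add_sum_filter_not Ω (fun l => 1 ≤ a u l), hz, ← hP]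
      ring
    rw [hz, hgz, hPsum]
    field_simp
    ring
  -- other coverage unchanged
  have hcovw : ∀ w, w ≠ u → ∑ l ∈ Ω, (a w l : ℝ) * θ' l = ∑ l ∈ Ω, (a w l : ℝ) * θ l := by
    intro w hw
    rw [split (fun l => (a w l : ℝ))]
    have hgw' : ∑ l ∈ P, (a w (g l) : ℝ) * θ l = ∑ l ∈ P, (a w l : ℝ) * θ l := by
      refine Finset.sum_congr rfl (fun l hl => ?_)
      rw [hgw l hl w hw]
    rw [hgw']
    rw [← Finset.sum_filter_add_sum_filter_not Ω (fun l => 1 ≤ a u l) (fun l => (a w l:ℝ) * θ l), ← hP]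
    ring
  -- total mass unchanged
  have hmass : ∑ l ∈ Ω, θ' l = ∑ l ∈ Ω, θ l := by
    have := split (fun _ => (1 : ℝ))
    simp only [one_mul] at this
    rw [this, ← Finset.sum_filter_add_sum_filter_not Ω (fun l => 1 ≤ a u l) θ, ← hP]
    ring
  -- cost
  have hcost : ∑ l ∈ Ω, c l * θ' l ≤ ∑ l ∈ Ω, c l * θ l := by
    rw [split c]
    have hle : ∑ l ∈ P, c (g l) * θ l ≤ ∑ l ∈ P, c l * θ l := by
      refine Finset.sum_le_sum (fun l hl => ?_)
      have hlΩ : l ∈ Ω := by rw [hP, Finset.mem_filter] at hl; exact hl.1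
      exact mul_le_mul_of_nonneg_right (hgc l hl) (hpos l hlΩ)
    calc (∑ l' ∈ Ω.filter (fun l => ¬ 1 ≤ a u l), c l' * θ l')
          + (1 / t) * ∑ l' ∈ P, c l' * θ l'
          + (1 - 1 / t) * ∑ l ∈ P, c (g l) * θ l
        ≤ (∑ l' ∈ Ω.filter (fun l => ¬ 1 ≤ a u l), c l' * θ l')
          + (1 / t) * ∑ l' ∈ P, c l' * θ l'
          + (1 - 1 / t) * ∑ l ∈ P, c l * θ l := by
          gcongr
      _ = ∑ l ∈ Ω, c l * θ l := by
          rw [← Finset.sum_filter_add_sum_filter_not Ω (fun l => 1 ≤ a u l) (fun l => c l * θ l), ← hP]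
          ring
  refine ⟨θ', ⟨hpos', fun w => ?_, by rw [hmass]; exact hK⟩, hcovu, hcovw, hcost⟩
  by_cases hwu : w = u
  · rw [hwu, hcovu]
  · rw [hcovw w hwu]; exact hcov w

end Aux

section Main
variable {α ι : Type*} [Fintype α]

lemma reduce_all (Ω : Finset ι) (c : ι → ℝ) (a : α → ι → ℕ) (K : ℕ)
    (hclose : ∀ l ∈ Ω, ∀ u : α, 1 ≤ a u l →
      ∃ l' ∈ Ω, a u l' = a u l - 1 ∧ (∀ w : α, w ≠ u → a w l' = a w l) ∧ c l' ≤ c l)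
    (S : Finset α) :
    ∀ θ, FeasibleOn Ω a K θ → ∃ θ', FeasibleOn Ω a K θ' ∧
      (∀ w ∈ S, ∑ l ∈ Ω, (a w l : ℝ) * θ' l = 1) ∧
      ∑ l ∈ Ω, c l * θ' l ≤ ∑ l ∈ Ω, c l * θ l := by
  classical
  induction S using Finset.induction_on with
  | empty => exact fun θ h => ⟨θ, h, by simp, le_refl _⟩
  | insert u S hu ih =>
    intro θ h
    obtain ⟨θ1, h1, hS, hc1⟩ := ih θ h
    obtain ⟨θ2, h2, hu2, hw2, hc2⟩ := reduce_one Ω c a K hclose u θ1 h1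
    refine ⟨θ2, h2, ?_, hc2.trans hc1⟩
    intro w hw
    rcases Finset.mem_insert.mp hw with rfl | hwS
    · exact hu2
    · have hwu : w ≠ u := by rintro rfl; exact hu hwS
      rw [hw2 w hwu]; exact hS w hwS

end Main

/-- If `Ω` is closed under removing a single customer visit without increasing cost, and the
equality-constrained LP is feasible, then replacing covering equalities by inequalities does
not change the LP value: `Ψ(Ω) = Ψ₌(Ω)`. -/
theorem cover_eq_partition_under_removal {α ι : Type*} [Fintype α]
    (Ω : Finset ι) (c : ι → ℝ) (a : α → ι → ℕ) (K : ℕ)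
    (hclose : ∀ l ∈ Ω, ∀ u : α, 1 ≤ a u l →
      ∃ l' ∈ Ω, a u l' = a u l - 1 ∧ (∀ w : α, w ≠ u → a w l' = a w l) ∧ c l' ≤ c l)
    (hfeas : ∃ θ : ι → ℝ, EqFeasibleOn Ω a K θ) :
    Psi Ω c a K = PsiEq Ω c a K := by
  classical
  set Scov : Set ℝ := {r : ℝ | ∃ θ : ι → ℝ, FeasibleOn Ω a K θ ∧ r = ∑ l ∈ Ω, c l * θ l}
    with hScov
  set Seq : Set ℝ := {r : ℝ | ∃ θ : ι → ℝ, EqFeasibleOn Ω a K θ ∧ r = ∑ l ∈ Ω, c l * θ l}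
    with hSeq
  have hincl : ∀ θ : ι → ℝ, EqFeasibleOn Ω a K θ → FeasibleOn Ω a K θ := by
    rintro θ ⟨h1, h2, h3⟩
    exact ⟨h1, fun u => le_of_eq (h2 u).symm, h3⟩
  have hsub : Seq ⊆ Scov := by
    rintro r ⟨θ, hθ, hr⟩
    exact ⟨θ, hincl θ hθ, hr⟩
  have hne_eq : Seq.Nonempty := by
    obtain ⟨θ, hθ⟩ := hfeas
    exact ⟨_, θ, hθ, rfl⟩
  have hne_cov : Scov.Nonempty := hne_eq.mono hsub
  -- bounded below
  set M : ℝ := ∑ l ∈ Ω, |c l| with hM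
  have hM0 : 0 ≤ M := Finset.sum_nonneg (fun l _ => abs_nonneg _)
  have hMc : ∀ l ∈ Ω, -M ≤ c l := by
    intro l hl
    have h1 : |c l| ≤ M := Finset.single_le_sum (fun x _ => abs_nonneg (c x)) hl
    have := neg_abs_le (c l)
    linarith
  have hbdd : BddBelow Scov := by
    refine ⟨-(M * K), ?_⟩
    rintro r ⟨θ, ⟨hpos, _, hK⟩, rfl⟩
    have h1 : ∑ l ∈ Ω, (-M) * θ l ≤ ∑ l ∈ Ω, c l * θ l :=
      Finset.sum_le_sum (fun l hl => mul_le_mul_of_nonneg_right (hMc l hl) (hpos l hl))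
    have h2 : ∑ l ∈ Ω, (-M) * θ l = -M * ∑ l ∈ Ω, θ l := by rw [Finset.mul_sum]
    nlinarith [hK]
  have hbddEq : BddBelow Seq := hbdd.mono hsub
  apply le_antisymm
  · exact csInf_le_csInf hbdd hne_eq hsub
  · refine le_csInf hne_cov ?_
    rintro r ⟨θ, hθ, rfl⟩
    obtain ⟨θ', hθ', heq, hcost⟩ :=
      reduce_all Ω c a K hclose Finset.univ θ hθ
    have hmemeq : (∑ l ∈ Ω, c l * θ' l) ∈ Seq := by
      refine ⟨θ', ⟨hθ'.1, fun u => heq u (Finset.mem_univ u), hθ'.2.2⟩, rfl⟩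
    exact (csInf_le hbddEq hmemeq).trans hcost
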